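/- Let T be a densely defined closed EP operator on a complex Hilbert space H, let S be a bounded EP operator on H, and suppose there exists a real number a with 0 < a < 1 such that ‖Sx‖ ≤ a‖Tx‖ for all x ∈ D(T). Then the sum T + S, defined on the domain D(T) by x ↦ Tx + Sx, is a closed operator with closed range and R(T + S) ⊆ R((T + S)*); that is, T + S is hypo-EP. -/

import Mathlib

open LinearPMap

variable {H : Type*} [NormedAddCommGroup H] [InnerProductSpace ℂ H] [CompleteSpace H]

/-- The range of a densely defined (partial) operator, as a submodule of `H`. -/
noncomputable def pmRange (T : H →ₗ.[ℂ] H) : Submodule ℂ H := LinearMap.range T.toFun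

/-- The sum `T + S` of a partial operator `T` and a bounded operator `S`, defined on `D(T)`
by `x ↦ T x + S x`. -/
noncomputable def pmAddL (T : H →ₗ.[ℂ] H) (S : H →L[ℂ] H) : H →ₗ.[ℂ] H where
  domain := T.domain
  toFun := T.toFun + (S : H →ₗ[ℂ] H) ∘ₗ T.domain.subtype


local notation "⟪" x ", " y "⟫" => @inner ℂ _ _ x y

lemma preimage_bound (A : H →ₗ.[ℂ] H) (hg : IsClosed (A.graph : Set (H × H)))
    (hr : IsClosed ((pmRange A : Submodule ℂ H) : Set H)) :
    ∃ C > (0 : ℝ), ∀ z ∈ pmRange A, ∃ x : A.domain, A x = z ∧ ‖(x : H)‖ ≤ C * ‖z‖ := by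
  haveI : CompleteSpace A.graph := hg.completeSpace_coe
  haveI : CompleteSpace (pmRange A) := hr.completeSpace_coe
  have hmem : ∀ g : A.graph, (g : H × H).2 ∈ pmRange A := by
    rintro ⟨g, hg'⟩
    rcases (A.mem_graph_iff).mp hg' with ⟨x, _, hx2⟩
    exact ⟨x, hx2⟩
  let q : A.graph →L[ℂ] pmRange A :=
    ContinuousLinearMap.codRestrict
      ((ContinuousLinearMap.snd ℂ H H).comp A.graph.subtypeL) _ hmem
  have hsurj : Function.Surjective q := by
    rintro ⟨z, hz⟩
    rcases hz with ⟨x, hx⟩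
    exact ⟨⟨((x : H), A x), A.mem_graph x⟩, Subtype.ext hx⟩
  obtain ⟨C, hC, hpre⟩ := q.exists_preimage_norm_le hsurj
  refine ⟨C, hC, fun z hz => ?_⟩
  obtain ⟨g, hgq, hgn⟩ := hpre ⟨z, hz⟩
  rcases (A.mem_graph_iff).mp g.2 with ⟨x, hx1, hx2⟩
  have hq2 : (g : H × H).2 = z := congrArg Subtype.val hgq
  refine ⟨x, by rw [hx2, hq2], ?_⟩
  have h1 : ‖(x : H)‖ ≤ ‖(g : H × H)‖ := by
    rw [hx1]; exact (le_max_left _ _).trans_eq (Prod.norm_def _).symm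
  have h2 : ‖(g : H × H)‖ = ‖g‖ := rfl
  have h3 : ‖(⟨z, hz⟩ : pmRange A)‖ = ‖z‖ := rfl
  calc ‖(x : H)‖ ≤ ‖g‖ := h2 ▸ h1
    _ ≤ C * ‖(⟨z, hz⟩ : pmRange A)‖ := hgn
    _ = C * ‖z‖ := by rw [h3]

lemma mem_range_adjoint (A : H →ₗ.[ℂ] H) (hd : Dense (A.domain : Set H))
    (hg : IsClosed (A.graph : Set (H × H)))
    (hr : IsClosed ((pmRange A : Submodule ℂ H) : Set H)) (y : H)
    (hy : ∀ x : A.domain, A x = 0 → ⟪y, (x : H)⟫ = 0) :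
    y ∈ pmRange A.adjoint := by
  haveI : CompleteSpace (pmRange A) := hr.completeSpace_coe
  obtain ⟨C, hC, hpre⟩ := preimage_bound A hg hr
  -- well-definedness
  have hwd : ∀ x₁ x₂ : A.domain, A x₁ = A x₂ → ⟪y, (x₁ : H)⟫ = ⟪y, (x₂ : H)⟫ := by
    intro x₁ x₂ h
    have h0 : A (x₁ - x₂) = 0 := by rw [A.map_sub, h, sub_self]
    have := hy _ h0
    rw [Submodule.coe_sub, inner_sub_right, sub_eq_zero] at this
    exact this
  have hex : ∀ z : pmRange A, ∃ x : A.domain, A x = (z : H) := fun z => z.2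
  let pick : pmRange A → A.domain := fun z => (hex z).choose
  have hpick : ∀ z : pmRange A, A (pick z) = (z : H) := fun z => (hex z).choose_spec
  let φ₀ : pmRange A →ₗ[ℂ] ℂ :=
    { toFun := fun z => ⟪y, ((pick z : A.domain) : H)⟫
      map_add' := by
        intro z₁ z₂
        have h : A (pick (z₁ + z₂)) = A (pick z₁ + pick z₂) := by
          rw [A.map_add, hpick, hpick, hpick]; rfl
        show ⟪y, ((pick (z₁ + z₂) : A.domain) : H)⟫ = _
        rw [hwd _ _ h, Submodule.coe_add, inner_add_right]
      map_smul' := by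
        intro c z
        have h : A (pick (c • z)) = A (c • pick z) := by
          rw [A.map_smul, hpick, hpick]; rfl
        show ⟪y, ((pick (c • z) : A.domain) : H)⟫ = _
        rw [hwd _ _ h, Submodule.coe_smul, inner_smul_right]; rfl }
  have hφ₀ : ∀ z : pmRange A, ‖φ₀ z‖ ≤ (‖y‖ * C) * ‖z‖ := by
    intro z
    obtain ⟨x₀, hx₀, hx₀n⟩ := hpre (z : H) z.2
    have : φ₀ z = ⟪y, (x₀ : H)⟫ := hwd _ _ (by rw [hpick, hx₀])
    rw [this]
    calc ‖⟪y, (x₀ : H)⟫‖ ≤ ‖y‖ * ‖(x₀ : H)‖ := norm_inner_le_norm _ _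
      _ ≤ ‖y‖ * (C * ‖(z : H)‖) := by
          exact mul_le_mul_of_nonneg_left hx₀n (norm_nonneg _)
      _ = (‖y‖ * C) * ‖z‖ := by rw [mul_assoc]; rfl
  let φ : pmRange A →L[ℂ] ℂ := φ₀.mkContinuous _ hφ₀
  let v : pmRange A := (InnerProductSpace.toDual ℂ (pmRange A)).symm φ
  have hv : ∀ x : A.domain, ⟪(v : H), A x⟫ = ⟪y, (x : H)⟫ := by
    intro x
    have hAx : A x ∈ pmRange A := ⟨x, rfl⟩
    have h1 : ⟪v, (⟨A x, hAx⟩ : pmRange A)⟫ = φ ⟨A x, hAx⟩ :=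
      InnerProductSpace.toDual_symm_apply
    have h2 : φ (⟨A x, hAx⟩ : pmRange A) = ⟪y, ((pick ⟨A x, hAx⟩ : A.domain) : H)⟫ := rfl
    have h3 : ⟪(v : H), A x⟫ = ⟪v, (⟨A x, hAx⟩ : pmRange A)⟫ := rfl
    rw [h3, h1, h2]
    exact hwd _ _ (by rw [hpick])
  have hvdom : (v : H) ∈ A.adjoint.domain :=
    mem_adjoint_domain_of_exists _ ⟨y, fun x => (hv x).symm⟩
  refine ⟨⟨(v : H), hvdom⟩, ?_⟩
  exact adjoint_apply_eq hd _ (fun x => (hv x).symm)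

/-- Let `T` be a densely defined closed EP operator on a complex Hilbert space `H` and `S`
a bounded EP operator on `H` with `‖Sx‖ ≤ a‖Tx‖` for all `x ∈ D(T)` and some `0 < a < 1`.
Then `T + S` (defined on `D(T)`) is a closed operator with closed range and
`R(T + S) ⊆ R((T + S)*)`; that is, `T + S` is hypo-EP. -/
theorem stmt12 (T : H →ₗ.[ℂ] H) (S : H →L[ℂ] H) (a : ℝ) (ha0 : 0 < a) (ha1 : a < 1)
    (hdense : Dense (T.domain : Set H))
    (hclosed : IsClosed (T.graph : Set (H × H)))
    (hTrange : IsClosed ((pmRange T : Submodule ℂ H) : Set H))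
    (hTEP : pmRange T = pmRange T.adjoint)
    (hSrange : IsClosed ((LinearMap.range (S : H →ₗ[ℂ] H) : Submodule ℂ H) : Set H))
    (hSEP : LinearMap.range (S : H →ₗ[ℂ] H) = LinearMap.range (ContinuousLinearMap.adjoint S : H →ₗ[ℂ] H))
    (hbound : ∀ x : T.domain, ‖S (x : H)‖ ≤ a * ‖T x‖) :
    IsClosed ((pmAddL T S).graph : Set (H × H)) ∧
      IsClosed ((pmRange (pmAddL T S) : Submodule ℂ H) : Set H) ∧
      pmRange (pmAddL T S) ≤ pmRange (pmAddL T S).adjoint := by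
  have hAapp : ∀ x : T.domain, (pmAddL T S) x = T x + S (x : H) := fun x => rfl
  -- graph is closed
  have hAgraph : IsClosed ((pmAddL T S).graph : Set (H × H)) := by
    have heq : ((pmAddL T S).graph : Set (H × H))
        = (fun p : H × H => (p.1, p.2 - S p.1)) ⁻¹' (T.graph : Set (H × H)) := by
      ext ⟨x, w⟩
      simp only [Set.mem_preimage, SetLike.mem_coe, mem_graph_iff]
      constructor
      · rintro ⟨u, hu1, hu2⟩
        refine ⟨u, hu1, ?_⟩
        rw [← hu1, ← hu2, hAapp u]; abel
      · rintro ⟨u, hu1, hu2⟩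
        refine ⟨u, hu1, ?_⟩
        rw [hAapp u, hu2, ← hu1]; abel
    rw [heq]
    exact hclosed.preimage
      (continuous_fst.prodMk (continuous_snd.sub (S.continuous.comp continuous_fst)))
  -- kernel facts
  have hSker : ∀ x : T.domain, T x = 0 → S (x : H) = 0 := by
    intro x hx
    have h := hbound x
    rw [hx, norm_zero, mul_zero] at h
    exact norm_le_zero_iff.mp h
  have hTker : ∀ x : T.domain, (pmAddL T S) x = 0 → T x = 0 := by
    intro x hx
    have hsum : T x + S (x : H) = 0 := by rw [← hAapp x]; exact hx
    have h1 : T x = -S (x : H) := eq_neg_of_add_eq_zero_left hsum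
    have h2 : ‖T x‖ ≤ a * ‖T x‖ := by
      calc ‖T x‖ = ‖S (x : H)‖ := by rw [h1, norm_neg]
        _ ≤ a * ‖T x‖ := hbound x
    have h3 : ‖T x‖ ≤ 0 := by nlinarith [norm_nonneg (T x)]
    exact norm_eq_zero.mp (le_antisymm h3 (norm_nonneg _))
  -- lower bound for A
  have hlowA : ∀ u : T.domain, (1 - a) * ‖T u‖ ≤ ‖(pmAddL T S) u‖ := by
    intro u
    have h1 : ‖T u‖ ≤ ‖T u + S (u : H)‖ + ‖S (u : H)‖ := by
      have h := norm_add_le (T u + S (u : H)) (-S (u : H))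
      simpa using h
    have h2 := hbound u
    rw [hAapp u]
    nlinarith
  -- the kernel as a closed submodule of H
  set K : Submodule ℂ H := (LinearMap.ker T.toFun).map T.domain.subtype with hK
  have hKclosed : IsClosed (K : Set H) := by
    have heq : (K : Set H) = (fun v : H => (v, (0 : H))) ⁻¹' (T.graph : Set (H × H)) := by
      ext v
      simp only [Set.mem_preimage, SetLike.mem_coe, mem_graph_iff, hK, Submodule.mem_map,
        LinearMap.mem_ker]
      constructor
      · rintro ⟨x, hx, rfl⟩; exact ⟨x, rfl, hx⟩
      · rintro ⟨x, hx1, hx2⟩; exact ⟨x, hx2, hx1⟩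
    rw [heq]
    exact hclosed.preimage (Continuous.prodMk continuous_id continuous_const)
  haveI : CompleteSpace K := hKclosed.completeSpace_coe
  -- lower bound modulo kernel
  obtain ⟨C, hCpos, hpre⟩ := preimage_bound T hclosed hTrange
  have hlow : ∀ u : T.domain, (u : H) ∈ Kᗮ → ‖(u : H)‖ ≤ C * ‖T u‖ := by
    intro u hu
    obtain ⟨x₀, hx₀, hx₀n⟩ := hpre (T u) ⟨u, rfl⟩
    have hdiff : ((x₀ : H) - (u : H)) ∈ K := by
      refine ⟨x₀ - u, ?_, rfl⟩
      show T (x₀ - u) = 0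
      rw [T.map_sub, hx₀, sub_self]
    have horth : ⟪(u : H), (x₀ : H) - (u : H)⟫ = 0 := by
      have h := (Submodule.mem_orthogonal K ((u : H))).mp hu _ hdiff
      rw [← inner_conj_symm, h]; simp
    have hpyth : ‖(x₀ : H)‖ ^ 2 = ‖(u : H)‖ ^ 2 + ‖(x₀ : H) - (u : H)‖ ^ 2 := by
      have hcomp : (x₀ : H) = (u : H) + ((x₀ : H) - (u : H)) := by abel
      rw [hcomp, @norm_add_sq ℂ _ _ _ _ ((u : H)) ((x₀ : H) - (u : H)), horth]
      simp
    have hnn := norm_nonneg ((x₀ : H) - (u : H))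
    have hnn2 := norm_nonneg ((u : H))
    have hnn3 := norm_nonneg ((x₀ : H))
    have hle : ‖(u : H)‖ ≤ ‖(x₀ : H)‖ := by nlinarith
    exact hle.trans hx₀n
  -- closed range
  have hArange : IsClosed ((pmRange (pmAddL T S) : Submodule ℂ H) : Set H) := by
    apply IsSeqClosed.isClosed
    intro zseq z hmem hz
    have hmem' : ∀ n, ∃ u : T.domain, (pmAddL T S) u = zseq n := fun n => hmem n
    choose x hx using hmem'
    have hxd : ∀ n, ∃ d : T.domain,
        ((d : H) = ((K.orthogonalProjectionOnto ((x n : H))) : H)) ∧ T d = 0 := by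
      intro n
      obtain ⟨w, hw, hweq⟩ := (K.orthogonalProjectionOnto ((x n : H))).2
      exact ⟨w, hweq, hw⟩
    choose d hd1 hd2 using hxd
    set x' : ℕ → T.domain := fun n => x n - d n with hx'
    have hx'A : ∀ n, (pmAddL T S) (x' n) = zseq n := by
      intro n
      rw [hx']
      show (pmAddL T S) (x n - d n) = zseq n
      have e : (pmAddL T S) (x n - d n) = (pmAddL T S) (x n) - (pmAddL T S) (d n) :=
        (pmAddL T S).map_sub _ _
      rw [e, hAapp (d n), hd2 n, hSker (d n) (hd2 n), add_zero, sub_zero,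
        hx n]
    have hx'orth : ∀ n, ((x' n : H)) ∈ Kᗮ := by
      intro n
      have : ((x' n : H)) = (x n : H) - K.orthogonalProjectionOnto ((x n : H)) := by
        rw [hx']
        show ((x n : H) - (d n : H)) = _
        rw [hd1 n]
      rw [this]
      exact Submodule.sub_starProjection_mem_orthogonal _
    -- comparison bound
    set b : ℝ := (1 - a)⁻¹ with hb
    have hbpos : 0 < b := inv_pos.mpr (by linarith)
    set Kc : ℝ := max C 1 * b with hKc
    have hKcpos : 0 < Kc := mul_pos (lt_of_lt_of_le one_pos (le_max_right C 1)) hbpos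
    have hTu : ∀ u : T.domain, ‖T u‖ ≤ b * ‖(pmAddL T S) u‖ := by
      intro u
      have h := hlowA u
      calc ‖T u‖ = b * ((1 - a) * ‖T u‖) := by
            rw [hb, ← mul_assoc, inv_mul_cancel₀ (by linarith : (1:ℝ) - a ≠ 0), one_mul]
        _ ≤ b * ‖(pmAddL T S) u‖ := mul_le_mul_of_nonneg_left h hbpos.le
    set g : ℕ → H × H := fun n => (((x' n : H)), T (x' n)) with hg
    have hdistg : ∀ m n, dist (g m) (g n) ≤ Kc * dist (zseq m) (zseq n) := by
      intro m n
      have hAu : (pmAddL T S) (x' m - x' n) = zseq m - zseq n := by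
        have e : (pmAddL T S) (x' m - x' n) = (pmAddL T S) (x' m) - (pmAddL T S) (x' n) :=
          (pmAddL T S).map_sub _ _
        rw [e, hx'A m, hx'A n]
      have hTub : ‖T (x' m - x' n)‖ ≤ b * ‖zseq m - zseq n‖ := by
        have := hTu (x' m - x' n)
        rwa [hAu] at this
      have horthu : ((x' m - x' n : T.domain) : H) ∈ Kᗮ := by
        rw [Submodule.coe_sub]
        exact Submodule.sub_mem _ (hx'orth m) (hx'orth n)
      have hfst : dist ((g m).1) ((g n).1) ≤ Kc * dist (zseq m) (zseq n) := by
        rw [dist_eq_norm, dist_eq_norm]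
        have h1 : ((x' m : H)) - ((x' n : H)) = ((x' m - x' n : T.domain) : H) := rfl
        rw [h1]
        calc ‖((x' m - x' n : T.domain) : H)‖ ≤ C * ‖T (x' m - x' n)‖ := hlow _ horthu
          _ ≤ C * (b * ‖zseq m - zseq n‖) := mul_le_mul_of_nonneg_left hTub hCpos.le
          _ ≤ Kc * ‖zseq m - zseq n‖ := by
              rw [hKc, ← mul_assoc]
              exact mul_le_mul_of_nonneg_right
                (mul_le_mul_of_nonneg_right (le_max_left C 1) hbpos.le) (norm_nonneg _)
      have hsnd : dist ((g m).2) ((g n).2) ≤ Kc * dist (zseq m) (zseq n) := by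
        rw [dist_eq_norm, dist_eq_norm]
        have h1 : T (x' m) - T (x' n) = T (x' m - x' n) := (T.map_sub _ _).symm
        show ‖T (x' m) - T (x' n)‖ ≤ _
        rw [h1]
        calc ‖T (x' m - x' n)‖ ≤ b * ‖zseq m - zseq n‖ := hTub
          _ ≤ Kc * ‖zseq m - zseq n‖ := by
              refine mul_le_mul_of_nonneg_right ?_ (norm_nonneg _)
              rw [hKc]
              nlinarith [le_max_right C 1]
      rw [Prod.dist_eq]
      exact max_le hfst hsnd
    have hzc : CauchySeq zseq := hz.cauchySeq
    have hgc : CauchySeq g := by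
      rw [Metric.cauchySeq_iff] at hzc ⊢
      intro ε hε
      obtain ⟨N, hN⟩ := hzc (ε / (Kc + 1)) (by positivity)
      refine ⟨N, fun m hm n hn => ?_⟩
      calc dist (g m) (g n) ≤ Kc * dist (zseq m) (zseq n) := hdistg m n
        _ ≤ Kc * (ε / (Kc + 1)) :=
            mul_le_mul_of_nonneg_left (le_of_lt (hN m hm n hn)) hKcpos.le
        _ < ε := by
            rw [mul_div_assoc', div_lt_iff₀ (by positivity : (0:ℝ) < Kc + 1)]
            nlinarith
    obtain ⟨p, hp⟩ := cauchySeq_tendsto_of_complete hgc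
    have hpg : p ∈ T.graph :=
      hclosed.mem_of_tendsto hp (Filter.Eventually.of_forall fun n => T.mem_graph (x' n))
    obtain ⟨u, hu1, hu2⟩ := T.mem_graph_iff.mp hpg
    have h1 : Filter.Tendsto (fun n => ((x' n : H))) Filter.atTop (nhds p.1) :=
      (continuous_fst.tendsto p).comp hp
    have h2 : Filter.Tendsto (fun n => T (x' n)) Filter.atTop (nhds p.2) :=
      (continuous_snd.tendsto p).comp hp
    have h3 : Filter.Tendsto (fun n => (pmAddL T S) (x' n)) Filter.atTop
        (nhds (p.2 + S p.1)) := by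
      have := h2.add ((S.continuous.tendsto p.1).comp h1)
      simpa [hAapp] using this
    have h4 : Filter.Tendsto (fun n => (pmAddL T S) (x' n)) Filter.atTop (nhds z) := by
      simpa [hx'A] using hz
    have h5 : z = p.2 + S p.1 := tendsto_nhds_unique h4 h3
    refine ⟨u, ?_⟩
    show (pmAddL T S) u = z
    rw [hAapp u, hu1, hu2, h5]
  refine ⟨hAgraph, hArange, ?_⟩
  -- range inclusion
  intro z hz
  obtain ⟨x, hx⟩ := hz
  apply mem_range_adjoint (pmAddL T S) hdense hAgraph hArange
  intro dd hdd
  have hTd : T dd = 0 := hTker dd hdd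
  have hSd : S ((dd : H)) = 0 := hSker dd hTd
  have hz' : z = T x + S ((x : H)) := by rw [← hx]; rfl
  have h1 : ⟪T x, ((dd : H))⟫ = 0 := by
    have hmem : T x ∈ pmRange T.adjoint := by
      rw [← hTEP]; exact ⟨x, rfl⟩
    obtain ⟨v, hv⟩ := hmem
    have hform := (adjoint_isFormalAdjoint hdense) v dd
    show ⟪T x, ((dd : H))⟫ = 0
    rw [← hv]
    calc ⟪T.adjoint v, ((dd : H))⟫ = ⟪((v : H)), T dd⟫ := hform
      _ = 0 := by rw [hTd, inner_zero_right]
  have h2 : ⟪S ((x : H)), ((dd : H))⟫ = 0 := by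
    have hmem : S ((x : H)) ∈ LinearMap.range (ContinuousLinearMap.adjoint S : H →ₗ[ℂ] H) := by
      rw [← hSEP]; exact ⟨(x : H), rfl⟩
    obtain ⟨v, hv⟩ := hmem
    rw [← hv, ContinuousLinearMap.coe_coe, ContinuousLinearMap.adjoint_inner_left, hSd, inner_zero_right]
  rw [hz', inner_add_left, h1, h2, add_zero]
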